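/- Let φ : ℝ → ℂ be a Schwartz function and let f : ℝ → ℂ satisfy |f(s) - f(t)| ≤ |s - t| for all s, t ∈ ℝ. Suppose a ∈ ℝ is such that the integral of τ ↦ φ(τ) e^{-2πi a τ} over ℝ vanishes (e.g., a ∉ supp φ̂). Define g(s) = ∫_ℝ φ(s - x) e^{2πi a x} f(x) dx. Then there is a constant C, depending only on φ (not on a or f), such that |g(s) - g(t)| ≤ C|s - t| for all s, t ∈ ℝ. -/

import Mathlib

open Real MeasureTheory

set_option maxHeartbeats 2000000 in
theorem stmt2_aux (φ : SchwartzMap ℝ ℂ) :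
    ∃ C : ℝ, ∀ (f : ℝ → ℂ) (a : ℝ),
      (∀ s t : ℝ, ‖f s - f t‖ ≤ |s - t|) →
      (∫ τ : ℝ, φ τ * Complex.exp (-(2 * π * Complex.I * a * τ))) = 0 →
      ∀ s t : ℝ,
        ‖(∫ x : ℝ, φ (s - x) * Complex.exp (2 * π * Complex.I * a * x) * f x) -
            ∫ x : ℝ, φ (t - x) * Complex.exp (2 * π * Complex.I * a * x) * f x‖ ≤
          C * |s - t| := by
  classical
  set ψ : SchwartzMap ℝ ℂ := SchwartzMap.derivCLM ℝ ℂ φ with hψdef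
  -- decay constant for the derivative
  obtain ⟨C0, hC0pos, hC0⟩ := ψ.decay 0 0
  obtain ⟨C3, hC3pos, hC3⟩ := ψ.decay 3 0
  set D : ℝ := 8 * (C0 + C3) with hDdef
  have hDpos : 0 < D := by positivity
  have hψbound : ∀ u : ℝ, ‖ψ u‖ * (1 + |u|) ^ 3 ≤ D := by
    intro u
    have h0 := hC0 u
    have h3 := hC3 u
    simp only [pow_zero, one_mul, norm_iteratedFDeriv_zero, Real.norm_eq_abs] at h0 h3
    have hcube : (1 + |u|) ^ 3 ≤ 8 * (1 + |u| ^ 3) := by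
      nlinarith [abs_nonneg u, sq_nonneg (|u| - 1), sq_nonneg (|u| + 1), sq_nonneg u]
    nlinarith [norm_nonneg (ψ u), abs_nonneg u]
  clear_value ψ D
  -- basic integrability of φ-norms
  have hφint : Integrable (fun y : ℝ => ‖φ y‖) := φ.integrable.norm
  have hφint1 : Integrable (fun y : ℝ => ‖φ y‖ * |y|) := by
    have h := φ.integrable_pow_mul volume 1
    simp only [pow_one, Real.norm_eq_abs] at h
    exact h.congr (Filter.Eventually.of_forall fun y => mul_comm _ _)
  set M0 : ℝ := ∫ y : ℝ, ‖φ y‖ with hM0def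
  set M1 : ℝ := ∫ y : ℝ, ‖φ y‖ * |y| with hM1def
  have hM0 : 0 ≤ M0 := integral_nonneg fun y => norm_nonneg _
  have hM1 : 0 ≤ M1 := integral_nonneg fun y => by positivity
  clear_value M0 M1
  -- the kernel for the small-distance case
  have hKint : Integrable (fun y : ℝ => |y| / (1 + |y|) ^ 3) := by
    refine integrable_inv_one_add_sq.mono' ?_ ?_
    · exact (continuous_abs.div (by continuity) fun y => by positivity).aestronglyMeasurable
    · refine Filter.Eventually.of_forall fun y => ?_
      rw [Real.norm_eq_abs, abs_of_nonneg (by positivity)]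
      rw [div_le_iff₀ (by positivity)]
      have : |y| * (1 + y ^ 2) ≤ (1 + |y|) ^ 3 := by
        nlinarith [abs_nonneg y, sq_nonneg y, sq_abs y, sq_nonneg (|y| - 1)]
      rw [inv_mul_eq_div, le_div_iff₀ (by positivity)]
      nlinarith [abs_nonneg y, sq_abs y]
  set K : ℝ := ∫ y : ℝ, |y| / (1 + |y|) ^ 3 with hKdef
  have hK : 0 ≤ K := integral_nonneg fun y => by positivity
  clear_value K
  refine ⟨2 * M1 + M0 + 8 * D * K, ?_⟩
  intro f a hf hzero s t
  set e : ℝ → ℂ := fun x => Complex.exp (2 * π * Complex.I * a * x) with hedef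
  have he : ∀ x : ℝ, ‖e x‖ = 1 := by
    intro x
    have : (2 * (π : ℂ) * Complex.I * a * x) = ((2 * π * a * x : ℝ) : ℂ) * Complex.I := by
      push_cast; ring
    rw [hedef]; simp only []
    rw [this, Complex.norm_exp_ofReal_mul_I]
  have hfc : Continuous f := by
    have : LipschitzWith 1 f := by
      apply LipschitzWith.of_dist_le_mul
      intro x y
      simpa [Complex.dist_eq, Real.dist_eq] using hf x y
    exact this.continuous
  have hfg : ∀ x : ℝ, ‖f x‖ ≤ ‖f 0‖ + |x| := by
    intro x
    calc ‖f x‖ = ‖f 0 + (f x - f 0)‖ := by congr 1; ring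
      _ ≤ ‖f 0‖ + ‖f x - f 0‖ := norm_add_le _ _
      _ ≤ ‖f 0‖ + |x| := by
          have h := hf x 0; simp only [sub_zero] at h; linarith
  have hec : Continuous e := by
    rw [hedef]
    exact Complex.continuous_exp.comp (continuous_const.mul Complex.continuous_ofReal)
  -- integrability of the full integrand
  have hint1 : ∀ u : ℝ, Integrable (fun x : ℝ => φ (u - x) * e x * f x) := by
    intro u
    have hG : Integrable (fun y : ℝ => ‖φ y‖ * (‖f 0‖ + |u - y|)) := by
      refine ((hφint.const_mul (‖f 0‖ + |u|)).add hφint1).mono' ?_ ?_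
      · exact ((φ.continuous.norm).mul (continuous_const.add
          ((continuous_const.sub continuous_id).abs))).aestronglyMeasurable
      · refine Filter.Eventually.of_forall fun y => ?_
        have h1 : |u - y| ≤ |u| + |y| := abs_sub _ _
        have h2 : (0:ℝ) ≤ ‖φ y‖ := norm_nonneg _
        rw [Real.norm_eq_abs, abs_of_nonneg (by positivity)]
        have h3 : ‖φ y‖ * (‖f 0‖ + |u - y|) ≤ ‖φ y‖ * (‖f 0‖ + |u| + |y|) :=
          mul_le_mul_of_nonneg_left (by linarith) h2
        simp only [Pi.add_apply]
        linarith [h3]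
    refine (hG.comp_sub_left u).mono' ?_ ?_
    · exact (((φ.continuous.comp (continuous_const.sub continuous_id)).mul hec).mul
        hfc).aestronglyMeasurable
    · refine Filter.Eventually.of_forall fun x => ?_
      have : ‖φ (u - x) * e x * f x‖ = ‖φ (u - x)‖ * ‖f x‖ := by
        rw [norm_mul, norm_mul, he x, mul_one]
      rw [this]
      have h1 : ‖f x‖ ≤ ‖f 0‖ + |x| := hfg x
      have h2 : u - (u - x) = x := by ring
      simp only [h2]
      exact mul_le_mul_of_nonneg_left h1 (norm_nonneg _)
  -- integrability without f
  have hint2 : ∀ u : ℝ, Integrable (fun x : ℝ => φ (u - x) * e x) := by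
    intro u
    refine (hφint.comp_sub_left u).mono' ?_ ?_
    · exact ((φ.continuous.comp (continuous_const.sub continuous_id)).mul
        hec).aestronglyMeasurable
    · exact Filter.Eventually.of_forall fun x => by rw [norm_mul, he x, mul_one]
  -- the modulated translate of φ has zero integral
  have hzero_u : ∀ u : ℝ, (∫ x : ℝ, φ (u - x) * e x) = 0 := by
    intro u
    have heq : ∀ x : ℝ, φ (u - x) * e x =
        (fun τ : ℝ => φ τ * Complex.exp (-(2 * π * Complex.I * a * τ)) *
          Complex.exp (2 * π * Complex.I * a * u)) (u - x) := by
      intro x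
      simp only [hedef]
      show φ (u - x) * Complex.exp (2 * ↑π * Complex.I * ↑a * ↑x)
          = φ (u - x) * Complex.exp (-(2 * ↑π * Complex.I * ↑a * ↑(u - x))) *
            Complex.exp (2 * ↑π * Complex.I * ↑a * ↑u)
      rw [mul_assoc (φ (u - x)), ← Complex.exp_add]
      congr 2
      push_cast; ring
    calc (∫ x : ℝ, φ (u - x) * e x)
        = ∫ x : ℝ, (fun τ : ℝ => φ τ * Complex.exp (-(2 * π * Complex.I * a * τ)) *
            Complex.exp (2 * π * Complex.I * a * u)) (u - x) :=
          integral_congr_ae (Filter.Eventually.of_forall heq)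
      _ = ∫ τ : ℝ, φ τ * Complex.exp (-(2 * π * Complex.I * a * τ)) *
            Complex.exp (2 * π * Complex.I * a * u) :=
          integral_sub_left_eq_self (fun τ : ℝ => φ τ *
            Complex.exp (-(2 * π * Complex.I * a * τ)) *
            Complex.exp (2 * π * Complex.I * a * u)) volume u
      _ = (∫ τ : ℝ, φ τ * Complex.exp (-(2 * π * Complex.I * a * τ))) *
            Complex.exp (2 * π * Complex.I * a * u) := integral_mul_const _ _
      _ = 0 := by rw [hzero, zero_mul]
  set m : ℝ := (s + t) / 2 with hmdef
  clear_value m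
  -- key identity
  have keyEq : (∫ x : ℝ, φ (s - x) * e x * f x) - (∫ x : ℝ, φ (t - x) * e x * f x) =
      ∫ x : ℝ, (φ (s - x) - φ (t - x)) * e x * (f x - f m) := by
    have expand : ∀ x : ℝ, (φ (s - x) - φ (t - x)) * e x * (f x - f m) =
        (φ (s - x) * e x * f x - φ (t - x) * e x * f x) -
          (φ (s - x) * e x * f m - φ (t - x) * e x * f m) := by
      intro x; ring
    have hA : Integrable (fun x : ℝ =>
        φ (s - x) * e x * f x - φ (t - x) * e x * f x) := (hint1 s).sub (hint1 t)
    have hB : Integrable (fun x : ℝ =>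
        φ (s - x) * e x * f m - φ (t - x) * e x * f m) :=
      ((hint2 s).mul_const (f m)).sub ((hint2 t).mul_const (f m))
    have e1 : (∫ x : ℝ, (φ (s - x) - φ (t - x)) * e x * (f x - f m))
        = (∫ x : ℝ, (φ (s - x) * e x * f x - φ (t - x) * e x * f x)) -
          ∫ x : ℝ, (φ (s - x) * e x * f m - φ (t - x) * e x * f m) := by
      rw [← integral_sub hA hB]
      exact integral_congr_ae (Filter.Eventually.of_forall expand)
    rw [e1, integral_sub (hint1 s) (hint1 t),
      integral_sub ((hint2 s).mul_const (f m)) ((hint2 t).mul_const (f m)),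
      integral_mul_const, integral_mul_const, hzero_u s, hzero_u t]
    ring
  rw [keyEq]
  rcases le_total (|s - t|) 1 with hst | hst
  · -- small case: use the derivative bound
    have hmv : ∀ x : ℝ, ‖φ (s - x) - φ (t - x)‖ ≤ 8 * D / (1 + |x - m|) ^ 3 * |s - t| := by
      intro x
      have key := Convex.norm_image_sub_le_of_norm_hasDerivWithin_le
        (f := fun u : ℝ => φ u) (f' := fun u : ℝ => deriv (⇑φ) u)
        (s := Set.uIcc (t - x) (s - x)) (C := 8 * D / (1 + |x - m|) ^ 3)
        (fun u _ => (φ.differentiable.differentiableAt.hasDerivAt).hasDerivWithinAt)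
        ?_ (convex_uIcc _ _) Set.left_mem_uIcc Set.right_mem_uIcc
      · have : (s - x) - (t - x) = s - t := by ring
        rw [this, Real.norm_eq_abs] at key
        exact key
      · intro u hu
        have hderiv : deriv (⇑φ) u = ψ u := by
          rw [hψdef]; exact (SchwartzMap.derivCLM_apply ℝ φ u).symm
        show ‖deriv (⇑φ) u‖ ≤ 8 * D / (1 + |x - m|) ^ 3
        rw [hderiv]
        -- u is within |s-t|/2 of m - x
        have hmem := Set.mem_uIcc.mp hu
        have h1 : s - t ≤ |s - t| := le_abs_self _
        have h2 : -(|s - t|) ≤ s - t := neg_abs_le _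
        have hcenter : |u - (m - x)| ≤ |s - t| / 2 := by
          rw [abs_le]
          rcases hmem with ⟨ha, hb⟩ | ⟨ha, hb⟩ <;>
            constructor <;> (rw [hmdef]; linarith)
        have habs : |x - m| ≤ |u| + 1 / 2 := by
          have h3 : |m - x| ≤ |u| + |u - (m - x)| := by
            have h6 : m - x = u - (u - (m - x)) := by ring
            calc |m - x| = |u - (u - (m - x))| := by rw [← h6]
              _ ≤ |u| + |u - (m - x)| := abs_sub _ _
          have h5 : |x - m| = |m - x| := abs_sub_comm _ _
          linarith
        have hbase : 1 + |x - m| ≤ 2 * (1 + |u|) := by linarith [abs_nonneg u]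
        have hcube : (1 + |x - m|) ^ 3 ≤ 8 * (1 + |u|) ^ 3 := by
          have h7 := pow_le_pow_left₀ (by positivity : (0:ℝ) ≤ 1 + |x - m|) hbase 3
          calc (1 + |x - m|) ^ 3 ≤ (2 * (1 + |u|)) ^ 3 := h7
            _ = 8 * (1 + |u|) ^ 3 := by ring
        rw [le_div_iff₀ (by positivity)]
        have hb := hψbound u
        nlinarith [norm_nonneg (ψ u), pow_pos (show (0:ℝ) < 1 + |u| by positivity) 3]
    -- bound the integral
    have hbound : ‖∫ x : ℝ, (φ (s - x) - φ (t - x)) * e x * (f x - f m)‖ ≤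
        ∫ x : ℝ, |s - t| * (8 * D * (|x - m| / (1 + |x - m|) ^ 3)) := by
      refine norm_integral_le_of_norm_le ?_ ?_
      · have : Integrable (fun y : ℝ => |s - t| * (8 * D * (|y| / (1 + |y|) ^ 3))) :=
          ((hKint.const_mul (8 * D)).const_mul (|s - t|))
        exact this.comp_sub_right m
      · refine Filter.Eventually.of_forall fun x => ?_
        have hnorm : ‖(φ (s - x) - φ (t - x)) * e x * (f x - f m)‖ =
            ‖φ (s - x) - φ (t - x)‖ * ‖f x - f m‖ := by
          rw [norm_mul, norm_mul, he x, mul_one]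
        rw [hnorm]
        have h1 := hmv x
        have h2 : ‖f x - f m‖ ≤ |x - m| := hf x m
        have h3 : (0:ℝ) ≤ 8 * D / (1 + |x - m|) ^ 3 :=
          div_nonneg (by linarith) (by positivity)
        calc ‖φ (s - x) - φ (t - x)‖ * ‖f x - f m‖
            ≤ (8 * D / (1 + |x - m|) ^ 3 * |s - t|) * |x - m| :=
              mul_le_mul h1 h2 (norm_nonneg _) (mul_nonneg h3 (abs_nonneg _))
          _ = |s - t| * (8 * D * (|x - m| / (1 + |x - m|) ^ 3)) := by
              ring
    refine hbound.trans ?_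
    have hval : (∫ x : ℝ, |s - t| * (8 * D * (|x - m| / (1 + |x - m|) ^ 3)))
        = |s - t| * (8 * D * K) := by
      have hshift : (∫ x : ℝ, |s - t| * (8 * D * (|x - m| / (1 + |x - m|) ^ 3)))
          = ∫ y : ℝ, |s - t| * (8 * D * (|y| / (1 + |y|) ^ 3)) :=
        integral_sub_right_eq_self (fun y : ℝ => |s - t| * (8 * D * (|y| / (1 + |y|) ^ 3))) m
      rw [hshift, integral_const_mul, integral_const_mul, ← hKdef]
    rw [hval]
    have : |s - t| * (8 * D * K) ≤ |s - t| * (2 * M1 + M0 + 8 * D * K) := by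
      apply mul_le_mul_of_nonneg_left _ (abs_nonneg _)
      linarith
    linarith [this, mul_comm (|s - t|) (2 * M1 + M0 + 8 * D * K)]
  · -- large case: |s-t| ≥ 1
    have hsm : |s - m| = |s - t| / 2 := by
      rw [hmdef]
      rw [show s - (s + t) / 2 = (s - t) / 2 by ring, abs_div]
      simp
    have htm : |t - m| = |s - t| / 2 := by
      rw [hmdef]
      rw [show t - (s + t) / 2 = -((s - t) / 2) by ring, abs_neg, abs_div]
      simp
    have hbound : ‖∫ x : ℝ, (φ (s - x) - φ (t - x)) * e x * (f x - f m)‖ ≤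
        ∫ x : ℝ, (‖φ (s - x)‖ * |s - x| + |s - t| / 2 * ‖φ (s - x)‖ +
          (‖φ (t - x)‖ * |t - x| + |s - t| / 2 * ‖φ (t - x)‖)) := by
      refine norm_integral_le_of_norm_le ?_ ?_
      · exact ((hφint1.comp_sub_left s).add ((hφint.comp_sub_left s).const_mul _)).add
          ((hφint1.comp_sub_left t).add ((hφint.comp_sub_left t).const_mul _))
      · refine Filter.Eventually.of_forall fun x => ?_
        have hnorm : ‖(φ (s - x) - φ (t - x)) * e x * (f x - f m)‖ =
            ‖φ (s - x) - φ (t - x)‖ * ‖f x - f m‖ := by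
          rw [norm_mul, norm_mul, he x, mul_one]
        rw [hnorm]
        have h2 : ‖f x - f m‖ ≤ |x - m| := hf x m
        have h3 : ‖φ (s - x) - φ (t - x)‖ ≤ ‖φ (s - x)‖ + ‖φ (t - x)‖ := norm_sub_le _ _
        have h4 : |x - m| ≤ |s - x| + |s - t| / 2 := by
          have := abs_sub_le x s m
          rw [hsm] at this
          rw [abs_sub_comm x s] at this
          linarith
        have h5 : |x - m| ≤ |t - x| + |s - t| / 2 := by
          have := abs_sub_le x t m
          rw [htm] at this
          rw [abs_sub_comm x t] at this
          linarith
        have hns : (0:ℝ) ≤ ‖φ (s - x)‖ := norm_nonneg _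
        have hnt : (0:ℝ) ≤ ‖φ (t - x)‖ := norm_nonneg _
        have hnf : (0:ℝ) ≤ ‖f x - f m‖ := norm_nonneg _
        have hxm : (0:ℝ) ≤ |x - m| := abs_nonneg _
        nlinarith [mul_le_mul_of_nonneg_left h4 hns, mul_le_mul_of_nonneg_left h5 hnt,
          mul_le_mul_of_nonneg_right h3 hnf, mul_le_mul_of_nonneg_left h2 hns,
          mul_le_mul_of_nonneg_left h2 hnt]
    refine hbound.trans ?_
    have hI1 : (∫ x : ℝ, (‖φ (s - x)‖ * |s - x| + |s - t| / 2 * ‖φ (s - x)‖ +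
        (‖φ (t - x)‖ * |t - x| + |s - t| / 2 * ‖φ (t - x)‖)))
        = (M1 + |s - t| / 2 * M0) + (M1 + |s - t| / 2 * M0) := by
      have hIs1 : Integrable (fun x : ℝ => ‖φ (s - x)‖ * |s - x|) := hφint1.comp_sub_left s
      have hIt1 : Integrable (fun x : ℝ => ‖φ (t - x)‖ * |t - x|) := hφint1.comp_sub_left t
      have hIs0 : Integrable (fun x : ℝ => |s - t| / 2 * ‖φ (s - x)‖) :=
        (hφint.comp_sub_left s).const_mul _
      have hIt0 : Integrable (fun x : ℝ => |s - t| / 2 * ‖φ (t - x)‖) :=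
        (hφint.comp_sub_left t).const_mul _
      have hSs : Integrable (fun x : ℝ =>
          ‖φ (s - x)‖ * |s - x| + |s - t| / 2 * ‖φ (s - x)‖) := hIs1.add hIs0
      have hSt : Integrable (fun x : ℝ =>
          ‖φ (t - x)‖ * |t - x| + |s - t| / 2 * ‖φ (t - x)‖) := hIt1.add hIt0
      rw [integral_add hSs hSt, integral_add hIs1 hIs0, integral_add hIt1 hIt0,
        integral_const_mul, integral_const_mul]
      rw [integral_sub_left_eq_self (fun y : ℝ => ‖φ y‖ * |y|) volume s,
        integral_sub_left_eq_self (fun y : ℝ => ‖φ y‖ * |y|) volume t,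
        integral_sub_left_eq_self (fun y : ℝ => ‖φ y‖) volume s,
        integral_sub_left_eq_self (fun y : ℝ => ‖φ y‖) volume t,
        ← hM0def, ← hM1def]
    rw [hI1]
    have h8 : (0:ℝ) ≤ 8 * D * K := mul_nonneg (by linarith) hK
    nlinarith [abs_nonneg (s - t)]

/-- If `φ` is Schwartz, `f` is `1`-Lipschitz, and `τ ↦ φ(τ) e^{-2πiaτ}` has zero integral,
then `g = φ ∗ (e^{2πia·} f)` is Lipschitz with constant depending only on `φ`. -/
theorem stmt2 (φ : SchwartzMap ℝ ℂ) :
    ∃ C : ℝ, ∀ (f : ℝ → ℂ) (a : ℝ),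
      (∀ s t : ℝ, ‖f s - f t‖ ≤ |s - t|) →
      (∫ τ : ℝ, φ τ * Complex.exp (-(2 * π * Complex.I * a * τ))) = 0 →
      ∀ s t : ℝ,
        ‖(∫ x : ℝ, φ (s - x) * Complex.exp (2 * π * Complex.I * a * x) * f x) -
            ∫ x : ℝ, φ (t - x) * Complex.exp (2 * π * Complex.I * a * x) * f x‖ ≤
          C * |s - t| :=
  stmt2_aux φ
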